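/- Let z = x + iy ∈ ℂ. If |z − πn| ≥ π/4 for all integers n, then e^{|y|} < 4|sin z|. -/

import Mathlib

open Complex Real

lemma abs_sin_sq (z : ℂ) :
    ‖Complex.sin z‖ ^ 2 = Real.sin z.re ^ 2 + Real.sinh z.im ^ 2 := by
  rw [← Complex.normSq_eq_norm_sq, Complex.sin_eq]
  have hre : (Complex.sin z.re * Complex.cosh z.im + Complex.cos z.re * Complex.sinh z.im * Complex.I).re
      = Real.sin z.re * Real.cosh z.im := by
    simp [Complex.sin_ofReal_re, Complex.cos_ofReal_re, Complex.sinh_ofReal_re,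
      Complex.cosh_ofReal_re, Complex.sin_ofReal_im, Complex.cos_ofReal_im,
      Complex.sinh_ofReal_im, Complex.cosh_ofReal_im]
  have him : (Complex.sin z.re * Complex.cosh z.im + Complex.cos z.re * Complex.sinh z.im * Complex.I).im
      = Real.cos z.re * Real.sinh z.im := by
    simp [Complex.sin_ofReal_re, Complex.cos_ofReal_re, Complex.sinh_ofReal_re,
      Complex.cosh_ofReal_re, Complex.sin_ofReal_im, Complex.cos_ofReal_im,
      Complex.sinh_ofReal_im, Complex.cosh_ofReal_im]
  rw [Complex.normSq_apply, hre, him]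
  have h1 : Real.cosh z.im ^ 2 = Real.sinh z.im ^ 2 + 1 := Real.cosh_sq z.im
  nlinarith [Real.sin_sq_add_cos_sq z.re]

set_option maxHeartbeats 2000000 in
/-- the standard estimate `e^{|Im z|} < 4|sin z|` away from the zeros of sine. -/
theorem stmt_9 (z : ℂ) (h : ∀ n : ℤ, Real.pi / 4 ≤ ‖z - Real.pi * n‖) :
    Real.exp |z.im| < 4 * ‖Complex.sin z‖ := by
  set x := z.re
  set y := z.im
  have habs : ‖Complex.sin z‖ ^ 2 = Real.sin x ^ 2 + Real.sinh y ^ 2 := abs_sin_sq z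
  have habsnn : 0 ≤ ‖Complex.sin z‖ := norm_nonneg _
  have hπ := Real.pi_pos
  rcases le_or_gt (1/2 : ℝ) |y| with hy | hy
  · -- large |y|: use sinh bound
    have hsinh_abs : Real.sinh |y| ≤ ‖Complex.sin z‖ := by
      have h1 : Real.sinh |y| ^ 2 = Real.sinh y ^ 2 := by
        rcases abs_cases y with ⟨he, _⟩ | ⟨he, _⟩ <;> rw [he] <;> simp [Real.sinh_neg]
      have h3 : 0 ≤ Real.sinh |y| := Real.sinh_nonneg_iff.mpr (abs_nonneg y)
      nlinarith [sq_nonneg (Real.sin x)]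
    have hsinh : Real.sinh |y| = (Real.exp |y| - Real.exp (-|y|)) / 2 := Real.sinh_eq |y|
    have hexp : Real.exp (-|y|) < Real.exp |y| / 2 := by
      have h2 : (2:ℝ) < Real.exp (2 * |y|) := by
        calc (2:ℝ) < Real.exp 1 := by
              have := Real.add_one_lt_exp (x := 1) one_ne_zero; linarith
          _ ≤ Real.exp (2 * |y|) := Real.exp_le_exp.2 (by linarith)
      have key : Real.exp |y| * Real.exp |y| = Real.exp (2 * |y|) := by
        rw [← Real.exp_add]; ring_nf
      have hinv : Real.exp (-|y|) * Real.exp |y| = 1 := by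
        rw [← Real.exp_add]; simp
      nlinarith [Real.exp_pos |y|, Real.exp_pos (-|y|)]
    calc Real.exp |y| < 2 * (Real.exp |y| - Real.exp (-|y|)) := by linarith
      _ = 4 * Real.sinh |y| := by rw [hsinh]; ring
      _ ≤ 4 * ‖Complex.sin z‖ := by linarith
  · -- small |y|: show |sin z| ≥ 1/2
    set n : ℤ := round (x / Real.pi) with hn_def
    set t : ℝ := x - Real.pi * n with ht_def
    have hn : |x / Real.pi - n| ≤ 1/2 := abs_sub_round (x / Real.pi)
    have hxn : |t| ≤ Real.pi / 2 := by
      have heq : t = (x / Real.pi - n) * Real.pi := by field_simp [ht_def]; exact ht_def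
      rw [heq, abs_mul, abs_of_pos hπ]
      have h1 : |x / Real.pi - n| * Real.pi ≤ 1/2 * Real.pi :=
        mul_le_mul_of_nonneg_right hn (le_of_lt hπ)
      linarith
    -- sin x squared equals sin t squared
    have hsq : Real.sin x ^ 2 = Real.sin t ^ 2 := by
      have hx : Real.sin x = Real.sin t * Real.cos (Real.pi * n)
          + Real.cos t * Real.sin (Real.pi * n) := by
        rw [← Real.sin_add, ht_def]; ring_nf
      have hc : Real.cos (Real.pi * n) = (-1) ^ n := by
        have h0 := Real.cos_int_mul_pi_sub 0 n
        simpa [mul_comm] using h0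
      have hs : Real.sin (Real.pi * n) = 0 := by
        rw [mul_comm]; exact Real.sin_int_mul_pi n
      have hc2 : ((-1 : ℝ) ^ n) ^ 2 = 1 := by
        rcases Int.even_or_odd n with he | ho
        · rw [he.neg_one_zpow]; norm_num
        · rw [ho.neg_one_zpow]; norm_num
      rw [hx, hs, hc, mul_zero, add_zero, mul_pow, hc2, mul_one]
    -- lower bound on sin t squared
    have h4A : 4 * t ^ 2 ≤ Real.pi ^ 2 * Real.sin t ^ 2 := by
      have hms : 2 / Real.pi * |t| ≤ Real.sin |t| := Real.mul_le_sin (abs_nonneg t) hxn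
      have hsnn : 0 ≤ Real.sin |t| :=
        le_trans (by positivity) hms
      have hst : Real.sin |t| ^ 2 = Real.sin t ^ 2 := by
        rcases abs_cases t with ⟨he, _⟩ | ⟨he, _⟩ <;> rw [he] <;> simp [Real.sin_neg]
      have hms2 : 2 * |t| ≤ Real.sin |t| * Real.pi := by
        rw [← div_le_iff₀ hπ]; calc 2 * |t| / Real.pi = 2 / Real.pi * |t| := by ring
          _ ≤ Real.sin |t| := hms
      rw [← hst]
      nlinarith [mul_le_mul hms2 hms2 (by positivity) (by positivity), _root_.sq_abs t]
    -- sinh bound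
    have hB : y ^ 2 ≤ Real.sinh y ^ 2 := by
      have h1 : Real.sinh |y| ^ 2 = Real.sinh y ^ 2 := by
        rcases abs_cases y with ⟨he, _⟩ | ⟨he, _⟩ <;> rw [he] <;> simp [Real.sinh_neg]
      have h2 : |y| ≤ Real.sinh |y| := Real.self_le_sinh_iff.mpr (abs_nonneg y)
      have h3 : 0 ≤ |y| := abs_nonneg y
      nlinarith [_root_.sq_abs y]
    -- distance bound
    have hAB : Real.pi ^ 2 / 16 ≤ t ^ 2 + y ^ 2 := by
      have h1 := h n
      have hre : (z - (Real.pi : ℂ) * (n : ℂ)).re = t := by simp [ht_def]; rfl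
      have him : (z - (Real.pi : ℂ) * (n : ℂ)).im = y := by simp; rfl
      have h2 : ‖z - Real.pi * n‖ ^ 2 = t ^ 2 + y ^ 2 := by
        rw [← Complex.normSq_eq_norm_sq, Complex.normSq_apply, hre, him]; ring
      have h3 : (Real.pi / 4) ^ 2 ≤ ‖z - Real.pi * n‖ ^ 2 :=
        pow_le_pow_left₀ (by positivity) h1 2
      rw [h2] at h3; nlinarith
    have hπ2 : (9:ℝ) ≤ Real.pi ^ 2 := by nlinarith [Real.pi_gt_three]
    clear_value t n
    have hkey : (1:ℝ)/4 ≤ Real.sin x ^ 2 + Real.sinh y ^ 2 := by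
      rw [hsq]
      have hS : Real.pi ^ 2 * (1/4) ≤ Real.pi ^ 2 * (Real.sin t ^ 2 + Real.sinh y ^ 2) := by
        nlinarith [mul_le_mul_of_nonneg_left hB (sq_nonneg Real.pi),
          mul_nonneg (show (0:ℝ) ≤ Real.pi ^ 2 - 4 by linarith [hπ2]) (sq_nonneg y)]
      have hp2 : (0:ℝ) < Real.pi ^ 2 := by positivity
      exact le_of_mul_le_mul_left hS hp2
    have hhalf : (1:ℝ)/2 ≤ ‖Complex.sin z‖ := by
      have h5 : (1:ℝ)/4 ≤ ‖Complex.sin z‖ ^ 2 := by rw [habs]; exact hkey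
      nlinarith [h5, habsnn]
    have hexp : Real.exp |y| < 2 := by
      have h1 : Real.exp |y| < Real.exp (1/2) := Real.exp_lt_exp.2 hy
      have h2 : Real.exp (1/2) * Real.exp (1/2) = Real.exp 1 := by
        rw [← Real.exp_add]; norm_num
      have h3 : Real.exp 1 < 4 := by
        have := Real.exp_one_lt_d9; linarith
      nlinarith [Real.exp_pos (1/2)]
    linarith
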